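/- The inversion f : F_q → F_q, f(x) = x^{q−2}, has additive index q whenever q > 4, and additive index 1 when q ∈ {2, 3, 4}. -/

import Mathlib

open Polynomial

/-- A function `f : 𝔽_q → 𝔽_q` (with `q = p^n`) has codimension at most `k` if there are an
`𝔽_p`-linear map `L : 𝔽_q → 𝔽_q`, an `𝔽_p`-subspace `U` of dimension `n - k`, and a constant
`a_V` for each coset `V` of `U`, such that `f(x) = L(x) + a_{U+x}` for all `x`. -/
def HasCodimAtMost (p n : ℕ) {F : Type*} [Field F] [Fintype F] [Algebra (ZMod p) F]
    (f : F → F) (k : ℕ) : Prop :=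
  ∃ (L : F →ₗ[ZMod p] F) (U : Submodule (ZMod p) F) (a : F ⧸ U → F),
    Module.finrank (ZMod p) ↥U = n - k ∧
    ∀ x : F, f x = L x + a (Submodule.Quotient.mk x)

/-- The codimension `codim f` is the smallest `k` such that `f` has codimension at most `k`. -/
noncomputable def codim (p n : ℕ) {F : Type*} [Field F] [Fintype F] [Algebra (ZMod p) F]
    (f : F → F) : ℕ :=
  sInf {k | HasCodimAtMost p n f k}

/-- The additive index of `f` is `AddInd f = p ^ codim f`. -/
noncomputable def addInd (p n : ℕ) {F : Type*} [Field F] [Fintype F] [Algebra (ZMod p) F]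
    (f : F → F) : ℕ :=
  p ^ codim p n f

lemma hasCodim_n (p n : ℕ) [Fact p.Prime] {F : Type*} [Field F] [Fintype F]
    [Algebra (ZMod p) F] (f : F → F) : HasCodimAtMost p n f n := by
  refine ⟨0, ⊥, fun v => f v.out, by simp, fun x => ?_⟩
  have h : (Submodule.Quotient.mk x : F ⧸ (⊥ : Submodule (ZMod p) F)).out = x := by
    have h2 : Submodule.Quotient.mk ((Submodule.Quotient.mk x : F ⧸ (⊥ : Submodule (ZMod p) F)).out)
        = (Submodule.Quotient.mk x : F ⧸ (⊥ : Submodule (ZMod p) F)) := Quotient.out_eq _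
    rwa [Submodule.Quotient.eq, Submodule.mem_bot, sub_eq_zero] at h2
  simp [h]

lemma deriv_not_const {F : Type*} [Field F] [Fintype F] (h5 : 5 ≤ Fintype.card F)
    (u : F) (hu : u ≠ 0) (c : F) (hc : ∀ x : F, (x + u)⁻¹ - x⁻¹ = c) : False := by
  classical
  have hcu : c = u⁻¹ := by have := hc 0; simp at this; exact this.symm
  subst hcu
  have key : ∀ x : F, x ≠ 0 → x + u ≠ 0 → x * x + u * x + u * u = 0 := by
    intro x hx hxu
    have := hc x
    field_simp at this
    linear_combination -this
  have hcard : 2 < (Finset.univ \ {0, -u} : Finset F).card := by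
    rw [Finset.card_sdiff_of_subset (Finset.subset_univ _)]
    have : ({0, -u} : Finset F).card ≤ 2 := Finset.card_insert_le _ _ |>.trans (by simp)
    have := Finset.card_univ (α := F)
    omega
  obtain ⟨a, b, d, ha, hb, hd, hab, had, hbd⟩ := Finset.two_lt_card_iff.mp hcard
  simp only [Finset.mem_sdiff, Finset.mem_insert, Finset.mem_singleton, not_or] at ha hb hd
  have Pa := key a ha.2.1 (by intro h; exact ha.2.2 (by linear_combination h))
  have Pb := key b hb.2.1 (by intro h; exact hb.2.2 (by linear_combination h))
  have Pd := key d hd.2.1 (by intro h; exact hd.2.2 (by linear_combination h))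
  have h1 : (a - b) * (a + b + u) = 0 := by linear_combination Pa - Pb
  have h2 : (a - d) * (a + d + u) = 0 := by linear_combination Pa - Pd
  have h1' := mul_eq_zero.mp h1 |>.resolve_left (sub_ne_zero.mpr hab)
  have h2' := mul_eq_zero.mp h2 |>.resolve_left (sub_ne_zero.mpr had)
  exact hbd (by linear_combination h1' - h2')

lemma pow_card_sub_two {F : Type*} [Field F] [Fintype F] (h5 : 5 ≤ Fintype.card F) (x : F) :
    x ^ (Fintype.card F - 2) = x⁻¹ := by
  rcases eq_or_ne x 0 with rfl | hx
  · rw [zero_pow (by omega), inv_zero]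
  · have h1 : x ^ (Fintype.card F - 1) = 1 := FiniteField.pow_card_sub_one_eq_one x hx
    have h2 : x ^ (Fintype.card F - 2) * x = 1 := by
      rw [← pow_succ]
      have h3 : Fintype.card F - 2 + 1 = Fintype.card F - 1 := by omega
      rw [h3, h1]
    field_simp at h2 ⊢
    linear_combination h2

lemma finrank_eq (p n : ℕ) [Fact p.Prime] {F : Type*} [Field F] [Fintype F]
    [Algebra (ZMod p) F] (hcard : Fintype.card F = p ^ n) :
    Module.finrank (ZMod p) F = n := by
  have h := Module.card_eq_pow_finrank (K := ZMod p) (V := F)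
  rw [ZMod.card, hcard] at h
  exact (Nat.pow_right_injective (Fact.out (p := p.Prime)).two_le h.symm)

lemma not_hasCodim_lt (p n : ℕ) [Fact p.Prime] {F : Type*} [Field F] [Fintype F]
    [Algebra (ZMod p) F] (h5 : 5 ≤ Fintype.card F) (k : ℕ) (hk : k < n)
    (h : HasCodimAtMost p n (fun x : F => x⁻¹) k) : False := by
  obtain ⟨L, U, a, hU, hf⟩ := h
  have hUne : U ≠ ⊥ := by
    intro hbot
    rw [hbot] at hU
    simp at hU
    omega
  obtain ⟨u, huU, hu⟩ := Submodule.exists_mem_ne_zero_of_ne_bot hUne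
  refine deriv_not_const h5 u hu (L u) fun x => ?_
  have hmk : (Submodule.Quotient.mk (x + u) : F ⧸ U) = Submodule.Quotient.mk x := by
    rw [Submodule.Quotient.eq]
    simpa using huU
  have h1 := hf (x + u)
  have h2 := hf x
  have h2' : x⁻¹ = L x + a (Submodule.Quotient.mk x) := h2
  simp only [hmk] at h1
  have h1' : (x + u)⁻¹ = L (x + u) + a (Submodule.Quotient.mk x) := h1
  rw [h1', h2', map_add]
  ring

/-- The inversion `f(x) = x^(q-2)` on `𝔽_q` has additive index `q` whenever
`q > 4`, and additive index `1` when `q ∈ {2, 3, 4}`. -/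
theorem stmt6 (p n : ℕ) [Fact p.Prime] (hn : 1 ≤ n) {F : Type*} [Field F]
    [Fintype F] [Algebra (ZMod p) F] (hcard : Fintype.card F = p ^ n) :
    (4 < Fintype.card F →
      addInd p n (fun x : F => x ^ (Fintype.card F - 2)) = Fintype.card F) ∧
    ((Fintype.card F = 2 ∨ Fintype.card F = 3 ∨ Fintype.card F = 4) →
      addInd p n (fun x : F => x ^ (Fintype.card F - 2)) = 1) := by
  have hp : p.Prime := Fact.out
  constructor
  · intro h4
    have h5 : 5 ≤ Fintype.card F := h4
    have hfun : (fun x : F => x ^ (Fintype.card F - 2)) = fun x : F => x⁻¹ := by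
      funext x; exact pow_card_sub_two h5 x
    rw [addInd, codim, hfun]
    have hmemn : n ∈ {k | HasCodimAtMost p n (fun x : F => x⁻¹) k} := hasCodim_n p n _
    have hinf : sInf {k | HasCodimAtMost p n (fun x : F => x⁻¹) k} = n := by
      refine le_antisymm (Nat.sInf_le hmemn) ?_
      by_contra hlt
      push_neg at hlt
      have hne : {k | HasCodimAtMost p n (fun x : F => x⁻¹) k}.Nonempty := ⟨n, hmemn⟩
      have hmem := Nat.sInf_mem hne
      exact not_hasCodim_lt p n h5 _ hlt hmem
    rw [hinf, ← hcard]
  · intro hsm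
    suffices h0 : HasCodimAtMost p n (fun x : F => x ^ (Fintype.card F - 2)) 0 by
      have hz : sInf {k | HasCodimAtMost p n (fun x : F => x ^ (Fintype.card F - 2)) k} = 0 :=
        Nat.sInf_eq_zero.mpr (Or.inl (by exact h0))
      rw [addInd, codim, hz, pow_zero]
    have htop : Module.finrank (ZMod p) (⊤ : Submodule (ZMod p) F)
        = n - 0 := by
      have hfr := finrank_eq p n hcard
      simpa using hfr
    rcases hsm with h2 | h3 | h4
    · -- q = 2 : f x = x ^ 0 = 1
      exact ⟨0, ⊤, fun _ => 1, htop, fun x => by simp [h2]⟩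
    · -- q = 3 : f x = x
      exact ⟨LinearMap.id, ⊤, fun _ => 0, htop, fun x => by simp [h3]⟩
    · -- q = 4 : p = 2, f x = x ^ 2 is Frobenius
      have hp2 : p = 2 := by
        have hdvd : p ∣ 4 := by rw [← h4, hcard]; exact dvd_pow_self p (by omega)
        have : p ∣ 2 := hp.dvd_of_dvd_pow (n := 2) (by norm_num at hdvd ⊢; exact hdvd)
        exact ((Nat.prime_dvd_prime_iff_eq hp Nat.prime_two).mp this)
      subst hp2
      haveI : CharP F 2 := charP_of_injective_algebraMap' (ZMod 2) (A := F) 2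
      refine ⟨{ toFun := fun x => x ^ 2,
                map_add' := fun x y => add_pow_char x y 2,
                map_smul' := fun c x => by
                  simp only [RingHom.id_apply, Algebra.smul_def, mul_pow, ← map_pow]
                  rw [ZMod.pow_card] },
              ⊤, fun _ => 0, htop, fun x => by simp [h4]⟩
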